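/- arXiv:1307.7760 — 3 statements merged into one kernel-verified Lean document; each statement's English description precedes it below -/
import Mathlib

section
/- For any two probability measures μ and ν on ℝ^d and every x ∈ ℝ^d, |d^K_μ(x) − d^K_ν(x)| ≤ D_K(μ,ν); in particular, sup_{x ∈ ℝ^d} |d^K_μ(x) − d^K_ν(x)| ≤ D_K(μ,ν). -/
open MeasureTheory

noncomputable def gaussK {d : ℕ} (σ : ℝ) (p x : EuclideanSpace ℝ (Fin d)) : ℝ :=
  σ ^ 2 * Real.exp (-‖p - x‖ ^ 2 / (2 * σ ^ 2))

noncomputable def kde {d : ℕ} (σ : ℝ) (μ : Measure (EuclideanSpace ℝ (Fin d)))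
    (x : EuclideanSpace ℝ (Fin d)) : ℝ :=
  ∫ p, gaussK σ p x ∂μ

noncomputable def kap {d : ℕ} (σ : ℝ) (μ ν : Measure (EuclideanSpace ℝ (Fin d))) : ℝ :=
  ∫ p, ∫ q, gaussK σ p q ∂ν ∂μ

noncomputable def DK {d : ℕ} (σ : ℝ) (μ ν : Measure (EuclideanSpace ℝ (Fin d))) : ℝ :=
  Real.sqrt (kap σ μ μ + kap σ ν ν - 2 * kap σ μ ν)

/-- kernel distance from a measure to a point -/
noncomputable def dKmu {d : ℕ} (σ : ℝ) (μ : Measure (EuclideanSpace ℝ (Fin d)))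
    (x : EuclideanSpace ℝ (Fin d)) : ℝ :=
  DK σ μ (Measure.dirac x)

/-- kernel distance between two points -/
noncomputable def DKpt {d : ℕ} (σ : ℝ) (p q : EuclideanSpace ℝ (Fin d)) : ℝ :=
  DK σ (Measure.dirac p) (Measure.dirac q)

/-- kernel power distance with respect to a finite nonempty point set `P` -/
noncomputable def Kpow {d : ℕ} (σ : ℝ) (P : Finset (EuclideanSpace ℝ (Fin d)))
    (hP : P.Nonempty) (μ : Measure (EuclideanSpace ℝ (Fin d)))
    (x : EuclideanSpace ℝ (Fin d)) : ℝ :=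
  Real.sqrt (P.inf' hP fun p => DKpt σ p x ^ 2 + dKmu σ μ p ^ 2)

section KDSaux

open Real
open scoped ENNReal

variable {d : ℕ}
local notation "V" => EuclideanSpace ℝ (Fin d)

noncomputable def phi (σ : ℝ) (p y : V) : ℝ := Real.exp (-(σ ^ 2)⁻¹ * ‖y - p‖ ^ 2)

noncomputable def Cst (d : ℕ) (σ : ℝ) : ℝ := (π / (2 / σ ^ 2)) ^ ((d : ℝ) / 2)

lemma Cst_pos {σ : ℝ} (hσ : 0 < σ) : 0 < Cst d σ := by
  apply Real.rpow_pos_of_pos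
  positivity

lemma phi_nonneg (σ : ℝ) (p y : V) : 0 ≤ phi σ p y := Real.exp_nonneg _

lemma phi_le_one {σ : ℝ} (hσ : 0 < σ) (p y : V) : phi σ p y ≤ 1 := by
  apply Real.exp_le_one_iff.2
  have h1 : (0:ℝ) ≤ (σ ^ 2)⁻¹ := by positivity
  have h2 := mul_nonneg h1 (sq_nonneg ‖y - p‖)
  linarith

lemma continuous_phi (σ : ℝ) : Continuous fun z : V × V => phi σ z.1 z.2 := by
  unfold phi; fun_prop

lemma phi_mul (σ : ℝ) (hσ : 0 < σ) (p q y : V) :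
    phi σ p y * phi σ q y =
      Real.exp (-‖p - q‖ ^ 2 / (2 * σ ^ 2)) *
        Real.exp (-(2 / σ ^ 2) * ‖y - (2:ℝ)⁻¹ • (p + q)‖ ^ 2) := by
  have hs : (0:ℝ) < σ ^ 2 := by positivity
  have hpar := parallelogram_law_with_norm ℝ (y - p) (y - q)
  have h1 : (y - p) + (y - q) = (2:ℝ) • (y - (2:ℝ)⁻¹ • (p + q)) := by
    rw [smul_sub]
    module
  have h2 : (y - p) - (y - q) = q - p := by abel
  have hn1 : ‖(y - p) + (y - q)‖ = 2 * ‖y - (2:ℝ)⁻¹ • (p + q)‖ := by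
    rw [h1, norm_smul]; simp
  have hnpq : ‖q - p‖ = ‖p - q‖ := norm_sub_rev q p
  rw [h2, hn1, hnpq] at hpar
  unfold phi
  rw [← Real.exp_add, ← Real.exp_add]
  congr 1
  have hexp : ‖y - p‖ ^ 2 + ‖y - q‖ ^ 2
      = 2 * ‖y - (2:ℝ)⁻¹ • (p + q)‖ ^ 2 + ‖p - q‖ ^ 2 / 2 := by
    nlinarith [hpar]
  set A := ‖y - (2:ℝ)⁻¹ • (p + q)‖ with hA
  have hs' : σ ^ 2 ≠ 0 := ne_of_gt hs
  field_simp
  linear_combination (-2) * hexp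

lemma integrable_gauss_norm {σ : ℝ} (hσ : 0 < σ) (b : ℝ) (hb : 0 < b) :
    Integrable (fun v : V => Real.exp (-b * ‖v‖ ^ 2)) volume := by
  have h := (GaussianFourier.integrable_cexp_neg_mul_sq_norm_add
      (b := (b : ℂ)) (by simpa using hb) 0 (0 : EuclideanSpace ℝ (Fin d))).norm
  refine h.congr (Filter.Eventually.of_forall fun v => ?_)
  simp only [Complex.norm_exp]
  norm_num
  left
  norm_cast

lemma integrable_phi_mul {σ : ℝ} (hσ : 0 < σ) (p q : V) :
    Integrable (fun y : V => phi σ p y * phi σ q y) volume := by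
  have hb : (0:ℝ) < 2 / σ ^ 2 := by positivity
  have h := ((integrable_gauss_norm (d := d) hσ _ hb).comp_sub_right
      ((2:ℝ)⁻¹ • (p + q))).const_mul (Real.exp (-‖p - q‖ ^ 2 / (2 * σ ^ 2)))
  refine h.congr (Filter.Eventually.of_forall fun y => ?_)
  simp only
  rw [phi_mul σ hσ p q y]

lemma integral_phi_mul {σ : ℝ} (hσ : 0 < σ) (p q : V) :
    ∫ y : V, phi σ p y * phi σ q y =
      Cst d σ * Real.exp (-‖p - q‖ ^ 2 / (2 * σ ^ 2)) := by
  have hb : (0:ℝ) < 2 / σ ^ 2 := by positivity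
  simp_rw [phi_mul σ hσ p q]
  rw [integral_const_mul]
  rw [integral_sub_right_eq_self (μ := volume)
      (fun v : V => Real.exp (-(2 / σ ^ 2) * ‖v‖ ^ 2)) ((2:ℝ)⁻¹ • (p + q))]
  rw [GaussianFourier.integral_rexp_neg_mul_sq_norm hb]
  rw [Cst, finrank_euclideanSpace_fin]
  ring

noncomputable def ePhi (σ : ℝ) (p y : V) : ℝ≥0∞ := ENNReal.ofReal (phi σ p y)

lemma measurable_ePhi (σ : ℝ) : Measurable fun z : V × V => ePhi σ z.1 z.2 :=
  ((continuous_phi σ).measurable).ennreal_ofReal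

lemma ePhi_le_one {σ : ℝ} (hσ : 0 < σ) (p y : V) : ePhi σ p y ≤ 1 := by
  rw [ePhi, ← ENNReal.ofReal_one]
  exact ENNReal.ofReal_le_ofReal (phi_le_one hσ p y)

noncomputable def Lfun (σ : ℝ) (μ : Measure V) (y : V) : ℝ≥0∞ := ∫⁻ p, ePhi σ p y ∂μ

set_option maxHeartbeats 1000000 in
lemma measurable_Lfun (σ : ℝ) (μ : Measure V) [SFinite μ] :
    Measurable (Lfun σ μ) := by
  have h : Measurable fun z : V × V => ePhi σ z.2 z.1 := by
    unfold ePhi phi; fun_prop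
  exact h.lintegral_prod_right'

lemma Lfun_le_one {σ : ℝ} (hσ : 0 < σ) (μ : Measure V) [IsProbabilityMeasure μ] (y : V) :
    Lfun σ μ y ≤ 1 := by
  calc Lfun σ μ y ≤ ∫⁻ _, 1 ∂μ := lintegral_mono fun p => ePhi_le_one hσ p y
  _ = 1 := by simp

lemma lintegral_ePhi_mul {σ : ℝ} (hσ : 0 < σ) (p q : V) :
    ∫⁻ y, ePhi σ p y * ePhi σ q y =
      ENNReal.ofReal (Cst d σ * Real.exp (-‖p - q‖ ^ 2 / (2 * σ ^ 2))) := by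
  have h : ∀ y : V, ePhi σ p y * ePhi σ q y = ENNReal.ofReal (phi σ p y * phi σ q y) := by
    intro y
    rw [ePhi, ePhi, ENNReal.ofReal_mul (phi_nonneg σ p y)]
  simp_rw [h]
  rw [← ofReal_integral_eq_lintegral_ofReal (integrable_phi_mul hσ p q)
      (Filter.Eventually.of_forall fun y => mul_nonneg (phi_nonneg _ _ _) (phi_nonneg _ _ _)),
    integral_phi_mul hσ p q]

lemma measurable_ePhi_left (σ : ℝ) (y : V) : Measurable fun q : V => ePhi σ q y := by
  unfold ePhi phi; fun_prop

lemma measurable_ePhi_right (σ : ℝ) (p : V) : Measurable fun y : V => ePhi σ p y := by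
  unfold ePhi phi; fun_prop

lemma lintegral_ePhi_Lfun {σ : ℝ} (hσ : 0 < σ) (ν : Measure V) [SFinite ν] (p : V) :
    ∫⁻ y, ePhi σ p y * Lfun σ ν y =
      ∫⁻ q, ENNReal.ofReal (Cst d σ * Real.exp (-‖p - q‖ ^ 2 / (2 * σ ^ 2))) ∂ν := by
  have hmeas : AEMeasurable (Function.uncurry fun y q : V => ePhi σ p y * ePhi σ q y)
      ((volume : Measure (EuclideanSpace ℝ (Fin d))).prod ν) := by
    apply Measurable.aemeasurable
    unfold Function.uncurry ePhi phi; fun_prop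
  calc ∫⁻ y, ePhi σ p y * Lfun σ ν y
      = ∫⁻ y, ∫⁻ q, ePhi σ p y * ePhi σ q y ∂ν := by
        refine lintegral_congr fun y => ?_
        rw [Lfun, lintegral_const_mul _ (measurable_ePhi_left σ y)]
    _ = ∫⁻ q, (∫⁻ y, ePhi σ p y * ePhi σ q y) ∂ν :=
        lintegral_lintegral_swap hmeas
    _ = ∫⁻ q, ENNReal.ofReal (Cst d σ * Real.exp (-‖p - q‖ ^ 2 / (2 * σ ^ 2))) ∂ν := by
        refine lintegral_congr fun q => lintegral_ePhi_mul hσ p q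

lemma lintegral_ePhi_Lfun_le {σ : ℝ} (hσ : 0 < σ) (ν : Measure V) [IsProbabilityMeasure ν]
    (p : V) : ∫⁻ y, ePhi σ p y * Lfun σ ν y ≤ ENNReal.ofReal (Cst d σ) := by
  rw [lintegral_ePhi_Lfun hσ ν p]
  calc ∫⁻ q, ENNReal.ofReal (Cst d σ * Real.exp (-‖p - q‖ ^ 2 / (2 * σ ^ 2))) ∂ν
      ≤ ∫⁻ _, ENNReal.ofReal (Cst d σ) ∂ν := by
        refine lintegral_mono fun q => ENNReal.ofReal_le_ofReal ?_
        have h1 : Real.exp (-‖p - q‖ ^ 2 / (2 * σ ^ 2)) ≤ 1 := by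
          apply Real.exp_le_one_iff.2
          have : (0:ℝ) < 2 * σ ^ 2 := by positivity
          have h2 := div_nonneg (sq_nonneg ‖p - q‖) this.le
          rw [neg_div]
          linarith
        nlinarith [le_of_lt (Cst_pos (d := d) hσ)]
    _ = ENNReal.ofReal (Cst d σ) := by simp

lemma integral_gaussK_eq {σ : ℝ} (hσ : 0 < σ) (ν : Measure V) [IsProbabilityMeasure ν]
    (p : V) :
    ∫ q, gaussK σ p q ∂ν = σ ^ 2 / Cst d σ * (∫⁻ y, ePhi σ p y * Lfun σ ν y).toReal := by
  have hC := Cst_pos (d := d) hσ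
  rw [lintegral_ePhi_Lfun hσ ν p]
  have h1 : ∀ q : V, gaussK σ p q
      = σ ^ 2 / Cst d σ * (Cst d σ * Real.exp (-‖p - q‖ ^ 2 / (2 * σ ^ 2))) := by
    intro q
    rw [gaussK]
    field_simp
  simp_rw [h1]
  rw [integral_const_mul]
  congr 1
  rw [integral_eq_lintegral_of_nonneg_ae]
  · exact Filter.Eventually.of_forall fun q =>
      mul_nonneg hC.le (Real.exp_nonneg _)
  · apply Continuous.aestronglyMeasurable
    fun_prop

noncomputable def Gq (σ : ℝ) {d : ℕ} (μ ν : Measure (EuclideanSpace ℝ (Fin d))) : ℝ≥0∞ :=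
  ∫⁻ y, Lfun σ μ y * Lfun σ ν y

lemma kap_eq {σ : ℝ} (hσ : 0 < σ) (μ ν : Measure V)
    [IsProbabilityMeasure μ] [IsProbabilityMeasure ν] :
    kap σ μ ν = σ ^ 2 / Cst d σ * (Gq σ μ ν).toReal := by
  have hmeas2 : Measurable fun z : V × V => ePhi σ z.1 z.2 * Lfun σ ν z.2 := by
    refine (measurable_ePhi σ).mul ?_
    exact (measurable_Lfun σ ν).comp measurable_snd
  have hswap : ∫⁻ p, (∫⁻ y, ePhi σ p y * Lfun σ ν y) ∂μ = Gq σ μ ν := by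
    rw [lintegral_lintegral_swap hmeas2.aemeasurable, Gq]
    refine lintegral_congr fun y => ?_
    rw [lintegral_mul_const _ (measurable_ePhi_left σ y)]
    rfl
  rw [kap]
  have h2 : ∀ p : V, ∫ q, gaussK σ p q ∂ν
      = σ ^ 2 / Cst d σ * (∫⁻ y, ePhi σ p y * Lfun σ ν y).toReal :=
    integral_gaussK_eq hσ ν
  simp_rw [h2]
  rw [integral_const_mul]
  congr 1
  rw [integral_toReal, hswap]
  · exact hmeas2.lintegral_prod_right'.aemeasurable
  · exact Filter.Eventually.of_forall fun p =>
      lt_of_le_of_lt (lintegral_ePhi_Lfun_le hσ ν p) ENNReal.ofReal_lt_top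

noncomputable def fQ (σ : ℝ) {d : ℕ} (μ : Measure (EuclideanSpace ℝ (Fin d))) (y : EuclideanSpace ℝ (Fin d)) : ℝ :=
  (Lfun σ μ y).toReal

lemma measurable_fQ (σ : ℝ) (μ : Measure V) [SFinite μ] : Measurable (fQ σ μ) :=
  (measurable_Lfun σ μ).ennreal_toReal

lemma Gq_eq_swap {σ : ℝ} (μ ν : Measure V) [SFinite μ] [SFinite ν] :
    ∫⁻ p, (∫⁻ y, ePhi σ p y * Lfun σ ν y) ∂μ = Gq σ μ ν := by
  have hmeas2 : Measurable fun z : V × V => ePhi σ z.1 z.2 * Lfun σ ν z.2 := by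
    refine (measurable_ePhi σ).mul ?_
    exact (measurable_Lfun σ ν).comp measurable_snd
  rw [lintegral_lintegral_swap hmeas2.aemeasurable, Gq]
  refine lintegral_congr fun y => ?_
  rw [lintegral_mul_const _ (measurable_ePhi_left σ y)]
  rfl

lemma Gq_ne_top {σ : ℝ} (hσ : 0 < σ) (μ ν : Measure V)
    [IsProbabilityMeasure μ] [IsProbabilityMeasure ν] : Gq σ μ ν ≠ ⊤ := by
  have h : Gq σ μ ν ≤ ENNReal.ofReal (Cst d σ) := by
    rw [← Gq_eq_swap μ ν]
    calc ∫⁻ p, (∫⁻ y, ePhi σ p y * Lfun σ ν y) ∂μ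
        ≤ ∫⁻ _, ENNReal.ofReal (Cst d σ) ∂μ :=
          lintegral_mono fun p => lintegral_ePhi_Lfun_le hσ ν p
      _ = ENNReal.ofReal (Cst d σ) := by simp
  exact ne_top_of_le_ne_top ENNReal.ofReal_ne_top h

lemma integral_fQ_pair {σ : ℝ} (hσ : 0 < σ) (μ ν : Measure V)
    [IsProbabilityMeasure μ] [IsProbabilityMeasure ν] :
    ∫ y, fQ σ μ y * fQ σ ν y = (Gq σ μ ν).toReal := by
  have hm : Measurable fun y => Lfun σ μ y * Lfun σ ν y :=
    (measurable_Lfun σ μ).mul (measurable_Lfun σ ν)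
  rw [Gq, ← integral_toReal hm.aemeasurable]
  · refine integral_congr_ae (Filter.Eventually.of_forall fun y => ?_)
    simp [fQ, ENNReal.toReal_mul]
  · refine Filter.Eventually.of_forall fun y => ?_
    calc Lfun σ μ y * Lfun σ ν y ≤ 1 * 1 :=
        mul_le_mul' (Lfun_le_one hσ μ y) (Lfun_le_one hσ ν y)
      _ < ⊤ := by simp

lemma integrable_fQ_pair {σ : ℝ} (hσ : 0 < σ) (μ ν : Measure V)
    [IsProbabilityMeasure μ] [IsProbabilityMeasure ν] :
    Integrable (fun y => fQ σ μ y * fQ σ ν y) volume := by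
  have hm : Measurable fun y => Lfun σ μ y * Lfun σ ν y :=
    (measurable_Lfun σ μ).mul (measurable_Lfun σ ν)
  have h := integrable_toReal_of_lintegral_ne_top hm.aemeasurable (Gq_ne_top hσ μ ν)
  refine h.congr (Filter.Eventually.of_forall fun y => ?_)
  simp [fQ, ENNReal.toReal_mul]

lemma integrable_fQ_sub_mul {σ : ℝ} (hσ : 0 < σ) (α β γ δ : Measure V)
    [IsProbabilityMeasure α] [IsProbabilityMeasure β]
    [IsProbabilityMeasure γ] [IsProbabilityMeasure δ] :
    Integrable (fun y => (fQ σ α y - fQ σ β y) * (fQ σ γ y - fQ σ δ y)) volume := by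
  have h : (fun y => (fQ σ α y - fQ σ β y) * (fQ σ γ y - fQ σ δ y))
      = fun y => (fQ σ α y * fQ σ γ y - fQ σ α y * fQ σ δ y)
          - (fQ σ β y * fQ σ γ y - fQ σ β y * fQ σ δ y) := funext fun y => by ring
  rw [h]
  exact ((integrable_fQ_pair hσ α γ).sub (integrable_fQ_pair hσ α δ)).sub
    ((integrable_fQ_pair hσ β γ).sub (integrable_fQ_pair hσ β δ))

lemma kap_combo {σ : ℝ} (hσ : 0 < σ) (μ ν : Measure V)
    [IsProbabilityMeasure μ] [IsProbabilityMeasure ν] :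
    kap σ μ μ + kap σ ν ν - 2 * kap σ μ ν
      = σ ^ 2 / Cst d σ * ∫ y, (fQ σ μ y - fQ σ ν y) ^ 2 := by
  have hexp : ∫ y, (fQ σ μ y - fQ σ ν y) ^ 2
      = ∫ y, fQ σ μ y * fQ σ μ y - 2 * (fQ σ μ y * fQ σ ν y) + fQ σ ν y * fQ σ ν y := by
    congr 1; funext y; ring
  have h2 : ∫ y, fQ σ μ y * fQ σ μ y - 2 * (fQ σ μ y * fQ σ ν y) + fQ σ ν y * fQ σ ν y
      = (∫ y, fQ σ μ y * fQ σ μ y) - 2 * (∫ y, fQ σ μ y * fQ σ ν y)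
        + ∫ y, fQ σ ν y * fQ σ ν y := by
    have i1 := integrable_fQ_pair hσ μ μ
    have i2 := (integrable_fQ_pair hσ μ ν).const_mul 2
    have i3 := integrable_fQ_pair hσ ν ν
    have i12 : Integrable
        (fun y => fQ σ μ y * fQ σ μ y - 2 * (fQ σ μ y * fQ σ ν y)) volume := i1.sub i2
    rw [integral_add i12 i3, integral_sub i1 i2, integral_const_mul]
  rw [hexp, h2, kap_eq hσ μ μ, kap_eq hσ μ ν, kap_eq hσ ν ν,
    ← integral_fQ_pair hσ μ μ, ← integral_fQ_pair hσ μ ν, ← integral_fQ_pair hσ ν ν]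
  ring

lemma integral_CS {u v : V → ℝ} (hum : AEStronglyMeasurable u volume)
    (hvm : AEStronglyMeasurable v volume)
    (hu2 : Integrable (fun y => u y * u y) volume)
    (hv2 : Integrable (fun y => v y * v y) volume)
    (huv : Integrable (fun y => u y * v y) volume) :
    ∫ y, u y * v y ≤ Real.sqrt (∫ y, u y * u y) * Real.sqrt (∫ y, v y * v y) := by
  have habs : Integrable (fun y => |u y| * |v y|) volume := by
    refine huv.abs.congr (Filter.Eventually.of_forall fun y => ?_)
    simp [abs_mul]
  have h1 : ∫ y, u y * v y ≤ ∫ y, |u y| * |v y| := by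
    refine integral_mono huv habs fun y => ?_
    calc u y * v y ≤ |u y * v y| := le_abs_self _
    _ = |u y| * |v y| := abs_mul _ _
  have hconj : Real.HolderConjugate 2 2 := by constructor <;> norm_num
  have hmemu : MemLp (fun y => |u y|) (ENNReal.ofReal 2) volume := by
    rw [show ENNReal.ofReal 2 = 2 by norm_num]
    have habsm : AEStronglyMeasurable (fun y => |u y|) volume :=
      hum.norm.congr (Filter.Eventually.of_forall fun y => (Real.norm_eq_abs (u y)))
    rw [memLp_two_iff_integrable_sq habsm]
    refine hu2.congr (Filter.Eventually.of_forall fun y => ?_)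
    simp only [sq_abs]; ring
  have hmemv : MemLp (fun y => |v y|) (ENNReal.ofReal 2) volume := by
    rw [show ENNReal.ofReal 2 = 2 by norm_num]
    have habsm : AEStronglyMeasurable (fun y => |v y|) volume :=
      hvm.norm.congr (Filter.Eventually.of_forall fun y => (Real.norm_eq_abs (v y)))
    rw [memLp_two_iff_integrable_sq habsm]
    refine hv2.congr (Filter.Eventually.of_forall fun y => ?_)
    simp only [sq_abs]; ring
  have h2 := integral_mul_le_Lp_mul_Lq_of_nonneg hconj
    (Filter.Eventually.of_forall fun y => abs_nonneg (u y))
    (Filter.Eventually.of_forall fun y => abs_nonneg (v y)) hmemu hmemv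
  have hiu : ∫ y, |u y| ^ (2:ℝ) = ∫ y, u y * u y := by
    refine integral_congr_ae (Filter.Eventually.of_forall fun y => ?_)
    show |u y| ^ (2:ℝ) = u y * u y
    rw [show ((2:ℝ)) = ((2:ℕ):ℝ) by norm_num, Real.rpow_natCast, sq_abs]; ring
  have hiv : ∫ y, |v y| ^ (2:ℝ) = ∫ y, v y * v y := by
    refine integral_congr_ae (Filter.Eventually.of_forall fun y => ?_)
    show |v y| ^ (2:ℝ) = v y * v y
    rw [show ((2:ℝ)) = ((2:ℕ):ℝ) by norm_num, Real.rpow_natCast, sq_abs]; ring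
  rw [hiu, hiv] at h2
  calc ∫ y, u y * v y ≤ ∫ y, |u y| * |v y| := h1
    _ ≤ (∫ y, u y * u y) ^ (1/(2:ℝ)) * (∫ y, v y * v y) ^ (1/(2:ℝ)) := h2
    _ = Real.sqrt (∫ y, u y * u y) * Real.sqrt (∫ y, v y * v y) := by
        rw [Real.sqrt_eq_rpow, Real.sqrt_eq_rpow]

lemma sqrt_integral_add_le {u v : V → ℝ} (hum : AEStronglyMeasurable u volume)
    (hvm : AEStronglyMeasurable v volume)
    (hu2 : Integrable (fun y => u y * u y) volume)
    (hv2 : Integrable (fun y => v y * v y) volume)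
    (huv : Integrable (fun y => u y * v y) volume) :
    Real.sqrt (∫ y, (u y + v y) * (u y + v y))
      ≤ Real.sqrt (∫ y, u y * u y) + Real.sqrt (∫ y, v y * v y) := by
  set A := ∫ y, u y * u y with hA
  set B := ∫ y, v y * v y with hB
  have hAnn : 0 ≤ A := integral_nonneg fun y => mul_self_nonneg _
  have hBnn : 0 ≤ B := integral_nonneg fun y => mul_self_nonneg _
  have hCS := integral_CS hum hvm hu2 hv2 huv
  have hexp : ∫ y, (u y + v y) * (u y + v y)
      = A + 2 * (∫ y, u y * v y) + B := by
    have h1 : ∫ y, (u y + v y) * (u y + v y)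
        = ∫ y, u y * u y + 2 * (u y * v y) + v y * v y := by
      congr 1; funext y; ring
    have i12 : Integrable (fun y => u y * u y + 2 * (u y * v y)) volume :=
      hu2.add (huv.const_mul 2)
    rw [h1, integral_add i12 hv2, integral_add hu2 (huv.const_mul 2), integral_const_mul]
  have hle : ∫ y, (u y + v y) * (u y + v y) ≤ (Real.sqrt A + Real.sqrt B) ^ 2 := by
    have hs : Real.sqrt A * Real.sqrt A = A := Real.mul_self_sqrt hAnn
    have ht : Real.sqrt B * Real.sqrt B = B := Real.mul_self_sqrt hBnn
    rw [hexp]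
    nlinarith [hCS]
  calc Real.sqrt (∫ y, (u y + v y) * (u y + v y))
      ≤ Real.sqrt ((Real.sqrt A + Real.sqrt B) ^ 2) := Real.sqrt_le_sqrt hle
    _ = Real.sqrt A + Real.sqrt B := by
        rw [Real.sqrt_sq (by positivity)]


lemma DK_eq {σ : ℝ} (hσ : 0 < σ) (μ ν : Measure V)
    [IsProbabilityMeasure μ] [IsProbabilityMeasure ν] :
    DK σ μ ν = Real.sqrt (σ ^ 2 / Cst d σ)
      * Real.sqrt (∫ y, (fQ σ μ y - fQ σ ν y) ^ 2) := by
  rw [DK, kap_combo hσ μ ν, Real.sqrt_mul (div_nonneg (sq_nonneg σ) (Cst_pos hσ).le)]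

lemma fQ_tri {σ : ℝ} (hσ : 0 < σ) (α β γ : Measure V)
    [IsProbabilityMeasure α] [IsProbabilityMeasure β] [IsProbabilityMeasure γ] :
    Real.sqrt (∫ y, (fQ σ α y - fQ σ γ y) ^ 2)
      ≤ Real.sqrt (∫ y, (fQ σ α y - fQ σ β y) ^ 2)
        + Real.sqrt (∫ y, (fQ σ β y - fQ σ γ y) ^ 2) := by
  have h1 : ∫ y, (fQ σ α y - fQ σ γ y) ^ 2
      = ∫ y, ((fQ σ α y - fQ σ β y) + (fQ σ β y - fQ σ γ y))
        * ((fQ σ α y - fQ σ β y) + (fQ σ β y - fQ σ γ y)) := by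
    congr 1; funext y; ring
  have h2 : ∫ y, (fQ σ α y - fQ σ β y) ^ 2
      = ∫ y, (fQ σ α y - fQ σ β y) * (fQ σ α y - fQ σ β y) := by
    congr 1; funext y; ring
  have h3 : ∫ y, (fQ σ β y - fQ σ γ y) ^ 2
      = ∫ y, (fQ σ β y - fQ σ γ y) * (fQ σ β y - fQ σ γ y) := by
    congr 1; funext y; ring
  rw [h1, h2, h3]
  exact sqrt_integral_add_le
    (((measurable_fQ σ α).sub (measurable_fQ σ β)).aestronglyMeasurable)
    (((measurable_fQ σ β).sub (measurable_fQ σ γ)).aestronglyMeasurable)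
    (integrable_fQ_sub_mul hσ α β α β)
    (integrable_fQ_sub_mul hσ β γ β γ)
    (integrable_fQ_sub_mul hσ α β β γ)


end KDSaux

/-- Stability (K4): `|d^K_μ(x) − d^K_ν(x)| ≤ D_K(μ,ν)` for every `x`, and hence the sup over
all `x` is bounded by `D_K(μ,ν)`. -/
theorem kernel_distance_stability {d : ℕ} (hd : 1 ≤ d) (σ : ℝ) (hσ : 0 < σ)
    (μ ν : Measure (EuclideanSpace ℝ (Fin d)))
    [IsProbabilityMeasure μ] [IsProbabilityMeasure ν] :
    (∀ x : EuclideanSpace ℝ (Fin d), |dKmu σ μ x - dKmu σ ν x| ≤ DK σ μ ν) ∧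
    (⨆ x : EuclideanSpace ℝ (Fin d), |dKmu σ μ x - dKmu σ ν x|) ≤ DK σ μ ν := by
  have key : ∀ x : EuclideanSpace ℝ (Fin d),
      |dKmu σ μ x - dKmu σ ν x| ≤ DK σ μ ν := by
    intro x
    have e1 : dKmu σ μ x = DK σ μ (Measure.dirac x) := rfl
    have e2 : dKmu σ ν x = DK σ ν (Measure.dirac x) := rfl
    rw [e1, e2, DK_eq hσ μ (Measure.dirac x), DK_eq hσ ν (Measure.dirac x), DK_eq hσ μ ν]
    set s := Real.sqrt (σ ^ 2 / Cst d σ) with hs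
    have hsnn : 0 ≤ s := Real.sqrt_nonneg _
    set a := Real.sqrt (∫ y, (fQ σ μ y - fQ σ (Measure.dirac x) y) ^ 2) with ha
    set b := Real.sqrt (∫ y, (fQ σ ν y - fQ σ (Measure.dirac x) y) ^ 2) with hb
    set c := Real.sqrt (∫ y, (fQ σ μ y - fQ σ ν y) ^ 2) with hc
    have hsym : ∫ y, (fQ σ ν y - fQ σ μ y) ^ 2 = ∫ y, (fQ σ μ y - fQ σ ν y) ^ 2 := by
      congr 1; funext y; ring
    have t1 : a ≤ c + b := fQ_tri hσ μ ν (Measure.dirac x)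
    have t2 : b ≤ c + a := by
      have := fQ_tri hσ ν μ (Measure.dirac x)
      rwa [hsym] at this
    have habs : |a - b| ≤ c := abs_sub_le_iff.2 ⟨by linarith, by linarith⟩
    calc |s * a - s * b| = s * |a - b| := by
          rw [← mul_sub, abs_mul, abs_of_nonneg hsnn]
      _ ≤ s * c := mul_le_mul_of_nonneg_left habs hsnn
  refine ⟨key, Real.iSup_le key ?_⟩
  rw [DK]
  exact Real.sqrt_nonneg _
end

section
/- For any probability measure μ on ℝ^d, any finite nonempty set P ⊆ ℝ^d, any point p ∈ P, and any point x ∈ ℝ^d, Kpow_P(μ,x)² ≤ 2·D_K(μ,δ_x)² + 3·D_K(p,x)². -/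
open MeasureTheory

section Aux

open Real

variable {d : ℕ}

lemma integrable_gauss (b : ℝ) (hb : 0 < b) :
    Integrable (fun t : EuclideanSpace ℝ (Fin d) => Real.exp (-b * ‖t‖^2)) := by
  have h := (GaussianFourier.integrable_cexp_neg_mul_sq_norm_add (V := EuclideanSpace ℝ (Fin d))
    (b := (b:ℂ)) (by simpa) 0 0).norm
  simp only [Complex.norm_exp] at h
  refine h.congr (Filter.Eventually.of_forall fun t => ?_)
  simp [← Complex.ofReal_pow]

lemma integral_gauss (b : ℝ) (hb : 0 < b) :
    ∫ t : EuclideanSpace ℝ (Fin d), Real.exp (-b * ‖t‖^2) = (π / b) ^ ((d:ℝ)/2) := by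
  rw [GaussianFourier.integral_rexp_neg_mul_sq_norm hb]
  norm_num [finrank_euclideanSpace_fin]

noncomputable def gfeat (σ : ℝ) (p t : EuclideanSpace ℝ (Fin d)) : ℝ :=
  Real.exp (-(1/σ^2) * ‖t - p‖^2)

lemma gfeat_nonneg (σ : ℝ) (p t : EuclideanSpace ℝ (Fin d)) : 0 ≤ gfeat σ p t :=
  (Real.exp_pos _).le

lemma gfeat_le_one {σ : ℝ} (hσ : 0 < σ) (p t : EuclideanSpace ℝ (Fin d)) : gfeat σ p t ≤ 1 := by
  rw [gfeat, Real.exp_le_one_iff]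
  have : 0 < σ^2 := by positivity
  have h2 := sq_nonneg ‖t - p‖
  have h3 : (0:ℝ) < 1/σ^2 := by positivity
  nlinarith

lemma gfeat_continuous (σ : ℝ) : Continuous (fun z : (EuclideanSpace ℝ (Fin d)) × (EuclideanSpace ℝ (Fin d)) => gfeat σ z.1 z.2) := by
  unfold gfeat
  fun_prop

lemma integrable_gfeat {σ : ℝ} (hσ : 0 < σ) (p : EuclideanSpace ℝ (Fin d)) :
    Integrable (fun t => gfeat σ p t) := by
  have h := (integrable_gauss (d := d) (1/σ^2) (by positivity)).comp_sub_right p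
  simpa [gfeat] using h

/-- the L² inner product of two feature gaussians -/
lemma gfeat_mul_integral {σ : ℝ} (hσ : 0 < σ) (p q : EuclideanSpace ℝ (Fin d)) :
    ∫ t, gfeat σ p t * gfeat σ q t =
      (π / (2/σ^2)) ^ ((d:ℝ)/2) * Real.exp (-‖p - q‖^2 / (2*σ^2)) := by
  have hσ2 : (0:ℝ) < σ^2 := by positivity
  set v : EuclideanSpace ℝ (Fin d) := (2:ℝ)⁻¹ • (q - p) with hv
  set m : EuclideanSpace ℝ (Fin d) := p + v with hm
  have hnv : ‖v‖^2 = ‖p - q‖^2 / 4 := by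
    rw [hv, norm_smul, norm_sub_rev]
    norm_num [mul_pow]
    ring
  have key : ∀ t : EuclideanSpace ℝ (Fin d),
      gfeat σ p t * gfeat σ q t =
        Real.exp (-‖p - q‖^2 / (2*σ^2)) * Real.exp (-(2/σ^2) * ‖t - m‖^2) := by
    intro t
    rw [gfeat, gfeat, ← Real.exp_add, ← Real.exp_add]
    congr 1
    have h1 : t - p = (t - m) + v := by rw [hm]; abel
    have h2 : t - q = (t - m) - v := by rw [hm, hv]; module
    have hpar := parallelogram_law_with_norm ℝ (t - m) v
    have hpar' : ‖(t-m) + v‖^2 + ‖(t-m) - v‖^2 = 2*(‖t-m‖^2 + ‖v‖^2) := by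
      simpa [pow_two] using hpar
    rw [h1, h2]
    linear_combination (-(1/σ^2)) * hpar' + (-(2/σ^2)) * hnv
  rw [integral_congr_ae (Filter.Eventually.of_forall key)]
  rw [integral_const_mul]
  have htr : ∫ t : EuclideanSpace ℝ (Fin d), Real.exp (-(2/σ^2) * ‖t - m‖^2)
      = ∫ t : EuclideanSpace ℝ (Fin d), Real.exp (-(2/σ^2) * ‖t‖^2) :=
    integral_sub_right_eq_self (fun t => Real.exp (-(2/σ^2) * ‖t‖^2)) m
  rw [htr, integral_gauss _ (by positivity)]
  ring

noncomputable def gC (d : ℕ) (σ : ℝ) : ℝ := (π / (2/σ^2)) ^ ((d:ℝ)/2)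

lemma gC_pos {σ : ℝ} (hσ : 0 < σ) : 0 < gC d σ := by
  have := Real.pi_pos
  apply Real.rpow_pos_of_pos
  positivity

lemma integral_gfeat {σ : ℝ} (hσ : 0 < σ) (p : EuclideanSpace ℝ (Fin d)) :
    ∫ t, gfeat σ p t = (π / (1/σ^2)) ^ ((d:ℝ)/2) := by
  have htr : ∫ t : EuclideanSpace ℝ (Fin d), Real.exp (-(1/σ^2) * ‖t - p‖^2)
      = ∫ t : EuclideanSpace ℝ (Fin d), Real.exp (-(1/σ^2) * ‖t‖^2) :=
    integral_sub_right_eq_self (fun t => Real.exp (-(1/σ^2) * ‖t‖^2)) p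
  rw [show (fun t => gfeat σ p t) = fun t : EuclideanSpace ℝ (Fin d) =>
    Real.exp (-(1/σ^2) * ‖t - p‖^2) from rfl, htr, integral_gauss _ (by positivity)]

lemma gaussK_eq {σ : ℝ} (hσ : 0 < σ) (p q : EuclideanSpace ℝ (Fin d)) :
    gaussK σ p q = (σ^2 / gC d σ) * ∫ t, gfeat σ p t * gfeat σ q t := by
  rw [gfeat_mul_integral hσ, gaussK, gC]
  have hC : (0:ℝ) < (π / (2/σ^2)) ^ ((d:ℝ)/2) := by
    have := Real.pi_pos; apply Real.rpow_pos_of_pos; positivity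
  field_simp

lemma integrable_gfeat_mul {σ : ℝ} (hσ : 0 < σ) (p q : EuclideanSpace ℝ (Fin d)) :
    Integrable (fun t => gfeat σ p t * gfeat σ q t) := by
  refine (integrable_gfeat hσ p).mono' ?_ ?_
  · exact (((gfeat_continuous σ).comp (Continuous.prodMk continuous_const continuous_id)).mul
      ((gfeat_continuous σ).comp (Continuous.prodMk continuous_const continuous_id))).aestronglyMeasurable
  · refine Filter.Eventually.of_forall fun t => ?_
    rw [Real.norm_of_nonneg (mul_nonneg (gfeat_nonneg _ _ _) (gfeat_nonneg _ _ _))]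
    nlinarith [gfeat_nonneg σ p t, gfeat_nonneg σ q t, gfeat_le_one hσ q t]

variable {σ : ℝ}

noncomputable def gH (σ : ℝ) (μ : Measure (EuclideanSpace ℝ (Fin d)))
    (t : EuclideanSpace ℝ (Fin d)) : ℝ := ∫ p, gfeat σ p t ∂μ

variable {μ : Measure (EuclideanSpace ℝ (Fin d))} [IsProbabilityMeasure μ]

lemma gH_sm : StronglyMeasurable (gH σ μ) := by
  have h : StronglyMeasurable (fun z : (EuclideanSpace ℝ (Fin d)) × (EuclideanSpace ℝ (Fin d)) =>
      gfeat σ z.2 z.1) :=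
    ((gfeat_continuous σ).comp continuous_swap).stronglyMeasurable
  exact h.integral_prod_right'

omit [IsProbabilityMeasure μ] in
lemma gH_nonneg (t : EuclideanSpace ℝ (Fin d)) : 0 ≤ gH σ μ t :=
  integral_nonneg fun p => gfeat_nonneg _ _ _

lemma integrable_gfeat_mu (hσ : 0 < σ) (t : EuclideanSpace ℝ (Fin d)) :
    Integrable (fun p => gfeat σ p t) μ := by
  refine (integrable_const (1:ℝ)).mono' ?_ ?_
  · exact ((gfeat_continuous σ).comp (Continuous.prodMk continuous_id continuous_const)).aestronglyMeasurable
  · exact Filter.Eventually.of_forall fun p => by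
      rw [Real.norm_of_nonneg (gfeat_nonneg _ _ _)]; exact gfeat_le_one hσ p t

lemma gH_le_one (hσ : 0 < σ) (t : EuclideanSpace ℝ (Fin d)) : gH σ μ t ≤ 1 := by
  have := integral_mono (μ := μ) (integrable_gfeat_mu hσ t) (integrable_const (1:ℝ))
    (fun p => gfeat_le_one hσ p t)
  simpa [gH] using this

lemma int_prod1 (hσ : 0 < σ) (y : EuclideanSpace ℝ (Fin d)) :
    Integrable (fun z : (EuclideanSpace ℝ (Fin d)) × (EuclideanSpace ℝ (Fin d)) =>
      gfeat σ z.1 z.2 * gfeat σ y z.2) (μ.prod volume) := by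
  have hc : Continuous (fun z : (EuclideanSpace ℝ (Fin d)) × (EuclideanSpace ℝ (Fin d)) =>
      gfeat σ z.1 z.2 * gfeat σ y z.2) :=
by unfold gfeat; fun_prop
  refine (integrable_prod_iff hc.aestronglyMeasurable).2 ⟨?_, ?_⟩
  · exact Filter.Eventually.of_forall fun p => integrable_gfeat_mul hσ p y
  · have he : (fun p : EuclideanSpace ℝ (Fin d) => ∫ t, ‖gfeat σ p t * gfeat σ y t‖)
        = fun p => gC d σ * Real.exp (-‖p - y‖^2 / (2*σ^2)) := by
      funext p
      rw [show (fun t => ‖gfeat σ p t * gfeat σ y t‖) = fun t => gfeat σ p t * gfeat σ y t by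
        funext t; exact Real.norm_of_nonneg (mul_nonneg (gfeat_nonneg _ _ _) (gfeat_nonneg _ _ _))]
      exact gfeat_mul_integral hσ p y
    rw [he]
    refine (integrable_const (μ := μ) (gC d σ)).mono' ?_ ?_
    · exact (Continuous.aestronglyMeasurable (by fun_prop))
    · refine Filter.Eventually.of_forall fun p => ?_
      have hC := gC_pos (d := d) hσ
      have h1 : Real.exp (-‖p - y‖^2 / (2*σ^2)) ≤ 1 := by
        rw [Real.exp_le_one_iff]
        have : (0:ℝ) < 2*σ^2 := by positivity
        have := sq_nonneg ‖p - y‖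
        apply div_nonpos_of_nonpos_of_nonneg <;> nlinarith
      rw [Real.norm_of_nonneg (by positivity)]
      nlinarith

lemma int_prod0 (hσ : 0 < σ) :
    Integrable (fun z : (EuclideanSpace ℝ (Fin d)) × (EuclideanSpace ℝ (Fin d)) =>
      gfeat σ z.1 z.2) (μ.prod volume) := by
  refine (integrable_prod_iff (gfeat_continuous σ).aestronglyMeasurable).2 ⟨?_, ?_⟩
  · exact Filter.Eventually.of_forall fun p => integrable_gfeat hσ p
  · have he : (fun p : EuclideanSpace ℝ (Fin d) => ∫ t, ‖gfeat σ p t‖)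
        = fun _ => (π / (1/σ^2)) ^ ((d:ℝ)/2) := by
      funext p
      rw [show (fun t => ‖gfeat σ p t‖) = fun t => gfeat σ p t by
        funext t; exact Real.norm_of_nonneg (gfeat_nonneg _ _ _)]
      exact integral_gfeat hσ p
    rw [he]
    exact integrable_const _

lemma integrable_gH (hσ : 0 < σ) : Integrable (gH σ μ) volume := by
  have := (int_prod0 (μ := μ) hσ).integral_prod_right
  exact this

lemma integrable_gH_mul (hσ : 0 < σ) (y : EuclideanSpace ℝ (Fin d)) :
    Integrable (fun t => gH σ μ t * gfeat σ y t) := by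
  refine (integrable_gfeat hσ y).mono' ?_ ?_
  · exact (gH_sm.mul ((gfeat_continuous σ).comp
      (Continuous.prodMk continuous_const continuous_id)).stronglyMeasurable).aestronglyMeasurable
  · refine Filter.Eventually.of_forall fun t => ?_
    rw [Real.norm_of_nonneg (mul_nonneg (gH_nonneg t) (gfeat_nonneg _ _ _))]
    nlinarith [gH_nonneg (σ := σ) (μ := μ) t, gfeat_nonneg σ y t, gH_le_one (σ := σ) (μ := μ) hσ t]

lemma integrable_gH_sq (hσ : 0 < σ) : Integrable (fun t => gH σ μ t ^ 2) := by
  refine (integrable_gH (μ := μ) hσ).mono' ?_ ?_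
  · exact ((gH_sm (σ := σ) (μ := μ)).mul (gH_sm (σ := σ) (μ := μ))).aestronglyMeasurable.congr
      (Filter.Eventually.of_forall fun t => (pow_two (gH σ μ t)).symm)
  · refine Filter.Eventually.of_forall fun t => ?_
    rw [Real.norm_of_nonneg (sq_nonneg _)]
    nlinarith [gH_nonneg (σ := σ) (μ := μ) t, gH_le_one (σ := σ) (μ := μ) hσ t]

lemma int_prod2 (hσ : 0 < σ) :
    Integrable (fun z : (EuclideanSpace ℝ (Fin d)) × (EuclideanSpace ℝ (Fin d)) =>
      gH σ μ z.2 * gfeat σ z.1 z.2) (μ.prod volume) := by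
  have hsm : AEStronglyMeasurable (fun z : (EuclideanSpace ℝ (Fin d)) × (EuclideanSpace ℝ (Fin d)) =>
      gH σ μ z.2 * gfeat σ z.1 z.2) (μ.prod volume) :=
    ((gH_sm.comp_measurable measurable_snd).mul
      (gfeat_continuous σ).stronglyMeasurable).aestronglyMeasurable
  refine (integrable_prod_iff hsm).2 ⟨?_, ?_⟩
  · exact Filter.Eventually.of_forall fun p => integrable_gH_mul hσ p
  · refine (integrable_const ((π / (1/σ^2)) ^ ((d:ℝ)/2))).mono' ?_ ?_
    · exact hsm.norm.integral_prod_right'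
    · refine Filter.Eventually.of_forall fun p => ?_
      have h1 : ∫ t, ‖gH σ μ t * gfeat σ p t‖ ≤ ∫ t, gfeat σ p t := by
        refine integral_mono (integrable_gH_mul hσ p).norm (integrable_gfeat hσ p) fun t => ?_
        rw [Real.norm_of_nonneg (mul_nonneg (gH_nonneg t) (gfeat_nonneg _ _ _))]
        nlinarith [gH_nonneg (σ := σ) (μ := μ) t, gfeat_nonneg σ p t, gH_le_one (σ := σ) (μ := μ) hσ t]
      rw [Real.norm_of_nonneg (integral_nonneg fun t => norm_nonneg _)]
      calc ∫ t, ‖gH σ μ t * gfeat σ p t‖ ≤ ∫ t, gfeat σ p t := h1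
        _ = (π / (1/σ^2)) ^ ((d:ℝ)/2) := integral_gfeat hσ p

lemma kde_eq (hσ : 0 < σ) (y : EuclideanSpace ℝ (Fin d)) :
    kde σ μ y = (σ^2 / gC d σ) * ∫ t, gH σ μ t * gfeat σ y t := by
  rw [kde]
  rw [integral_congr_ae (Filter.Eventually.of_forall fun p => gaussK_eq hσ p y)]
  rw [integral_const_mul]
  congr 1
  have hswap := integral_integral_swap (f := fun p t => gfeat σ p t * gfeat σ y t)
    (μ := μ) (ν := volume) (int_prod1 hσ y)
  rw [hswap]
  congr 1
  funext t
  rw [integral_mul_const]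
  rfl

lemma gaussK_symm (p q : EuclideanSpace ℝ (Fin d)) : gaussK σ p q = gaussK σ q p := by
  rw [gaussK, gaussK, norm_sub_rev]

lemma kap_eq_s7 (hσ : 0 < σ) : kap σ μ μ = (σ^2 / gC d σ) * ∫ t, gH σ μ t ^ 2 := by
  rw [kap]
  have h1 : ∀ p, ∫ q, gaussK σ p q ∂μ = (σ^2 / gC d σ) * ∫ t, gH σ μ t * gfeat σ p t := by
    intro p
    rw [integral_congr_ae (Filter.Eventually.of_forall fun q => gaussK_symm p q)]
    exact kde_eq hσ p
  rw [integral_congr_ae (Filter.Eventually.of_forall h1), integral_const_mul]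
  congr 1
  have hswap := integral_integral_swap (f := fun p t => gH σ μ t * gfeat σ p t)
    (μ := μ) (ν := volume) (int_prod2 hσ)
  rw [hswap]
  congr 1
  funext t
  rw [integral_const_mul, pow_two]
  rfl

omit [IsProbabilityMeasure μ] in
lemma self_eq (hσ : 0 < σ) (y : EuclideanSpace ℝ (Fin d)) :
    σ^2 = (σ^2 / gC d σ) * ∫ t, gfeat σ y t * gfeat σ y t := by
  rw [gfeat_mul_integral hσ y y]
  have hC : 0 < gC d σ := gC_pos hσ
  rw [gC] at hC ⊢
  simp only [sub_self, norm_zero]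
  rw [show -(0:ℝ)^2 / (2*σ^2) = 0 by norm_num, Real.exp_zero]
  field_simp

lemma key_ineq (hσ : 0 < σ) (p₀ x : EuclideanSpace ℝ (Fin d)) :
    0 ≤ kap σ μ μ + 5*σ^2 + 2*kde σ μ p₀ - 4*kde σ μ x - 4*gaussK σ p₀ x := by
  have hC : 0 < gC d σ := gC_pos hσ
  have iH2 := integrable_gH_sq (μ := μ) hσ
  have iHp := integrable_gH_mul (μ := μ) hσ p₀
  have iHx := integrable_gH_mul (μ := μ) hσ x
  have ipp := integrable_gfeat_mul (d := d) hσ p₀ p₀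
  have ixx := integrable_gfeat_mul (d := d) hσ x x
  have ipx := integrable_gfeat_mul (d := d) hσ p₀ x
  have expand : ∫ t, (gH σ μ t + gfeat σ p₀ t - 2*gfeat σ x t)^2
      = (∫ t, gH σ μ t^2) + (∫ t, gfeat σ p₀ t * gfeat σ p₀ t)
        + 4*(∫ t, gfeat σ x t * gfeat σ x t)
        + 2*(∫ t, gH σ μ t * gfeat σ p₀ t) - 4*(∫ t, gH σ μ t * gfeat σ x t)
        - 4*(∫ t, gfeat σ p₀ t * gfeat σ x t) := by
    have he : (fun t => (gH σ μ t + gfeat σ p₀ t - 2*gfeat σ x t)^2)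
        = fun t => (((gH σ μ t^2 + gfeat σ p₀ t * gfeat σ p₀ t)
            + (4:ℝ)*(gfeat σ x t * gfeat σ x t)) + (2:ℝ)*(gH σ μ t * gfeat σ p₀ t))
          - ((4:ℝ)*(gH σ μ t * gfeat σ x t) + (4:ℝ)*(gfeat σ p₀ t * gfeat σ x t)) := by
      funext t; ring
    have i1 : Integrable (fun t => gH σ μ t^2 + gfeat σ p₀ t * gfeat σ p₀ t) volume := iH2.add ipp
    have i2 : Integrable (fun t => (gH σ μ t^2 + gfeat σ p₀ t * gfeat σ p₀ t)
        + (4:ℝ)*(gfeat σ x t * gfeat σ x t)) volume := i1.add (ixx.const_mul 4)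
    have i3 : Integrable (fun t => ((gH σ μ t^2 + gfeat σ p₀ t * gfeat σ p₀ t)
        + (4:ℝ)*(gfeat σ x t * gfeat σ x t)) + (2:ℝ)*(gH σ μ t * gfeat σ p₀ t)) volume :=
      i2.add (iHp.const_mul 2)
    have i4 : Integrable (fun t => (4:ℝ)*(gH σ μ t * gfeat σ x t)
        + (4:ℝ)*(gfeat σ p₀ t * gfeat σ x t)) volume := (iHx.const_mul 4).add (ipx.const_mul 4)
    rw [he, integral_sub i3 i4, integral_add i2 (iHp.const_mul 2), integral_add i1 (ixx.const_mul 4),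
      integral_add iH2 ipp, integral_add (iHx.const_mul 4) (ipx.const_mul 4),
      integral_const_mul, integral_const_mul, integral_const_mul, integral_const_mul]
    ring
  have pos : 0 ≤ ∫ t, (gH σ μ t + gfeat σ p₀ t - 2*gfeat σ x t)^2 :=
    integral_nonneg fun t => sq_nonneg _
  have goal_eq : kap σ μ μ + 5*σ^2 + 2*kde σ μ p₀ - 4*kde σ μ x - 4*gaussK σ p₀ x
      = (σ^2 / gC d σ) * ∫ t, (gH σ μ t + gfeat σ p₀ t - 2*gfeat σ x t)^2 := by
    rw [kap_eq_s7 hσ, kde_eq hσ p₀, kde_eq hσ x, gaussK_eq hσ p₀ x, expand]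
    linear_combination 4 * (self_eq (d := d) hσ x) + (self_eq (d := d) hσ p₀)
  rw [goal_eq]
  exact mul_nonneg (div_nonneg (sq_nonneg σ) hC.le) pos

omit [IsProbabilityMeasure μ] in
lemma kap_dirac_dirac (y z : EuclideanSpace ℝ (Fin d)) :
    kap σ (Measure.dirac y) (Measure.dirac z) = gaussK σ y z := by
  simp [kap, integral_dirac]

omit [IsProbabilityMeasure μ] in
lemma kap_mu_dirac (ν : Measure (EuclideanSpace ℝ (Fin d))) (x : EuclideanSpace ℝ (Fin d)) :
    kap σ ν (Measure.dirac x) = kde σ ν x := by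
  simp [kap, kde, integral_dirac]

omit [IsProbabilityMeasure μ] in
lemma gaussK_self (y : EuclideanSpace ℝ (Fin d)) : gaussK σ y y = σ^2 := by
  simp [gaussK]

lemma sqrt_sq_eq_max (x : ℝ) : Real.sqrt x ^ 2 = max x 0 := by
  rcases le_total 0 x with h | h
  · rw [Real.sq_sqrt h, max_eq_left h]
  · rw [Real.sqrt_eq_zero'.mpr h]
    simp [max_eq_right h]

end Aux

/-- `Kpow_P(μ,x)² ≤ 2·D_K(μ,δ_x)² + 3·D_K(p,x)²` for any `p ∈ P`. -/
theorem kernel_power_distance_upper {d : ℕ} (hd : 1 ≤ d) (σ : ℝ) (hσ : 0 < σ)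
    (μ : Measure (EuclideanSpace ℝ (Fin d))) [IsProbabilityMeasure μ]
    (P : Finset (EuclideanSpace ℝ (Fin d))) (hP : P.Nonempty)
    (p : EuclideanSpace ℝ (Fin d)) (hp : p ∈ P)
    (x : EuclideanSpace ℝ (Fin d)) :
    Kpow σ P hP μ x ^ 2 ≤ 2 * DK σ μ (Measure.dirac x) ^ 2 + 3 * DKpt σ p x ^ 2 := by
  have hKp : Kpow σ P hP μ x ^ 2 ≤ DKpt σ p x ^ 2 + dKmu σ μ p ^ 2 := by
    rw [Kpow, Real.sq_sqrt (Finset.le_inf' hP _ fun b _ => add_nonneg (sq_nonneg _) (sq_nonneg _))]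
    exact Finset.inf'_le _ hp
  refine hKp.trans ?_
  have e1 : DKpt σ p x ^ 2 = max (2*σ^2 - 2*gaussK σ p x) 0 := by
    rw [DKpt, DK, sqrt_sq_eq_max, kap_dirac_dirac, kap_dirac_dirac,
      kap_dirac_dirac, gaussK_self, gaussK_self]
    congr 1
    ring
  have e2 : dKmu σ μ p ^ 2 = max (kap σ μ μ + σ^2 - 2*kde σ μ p) 0 := by
    rw [dKmu, DK, sqrt_sq_eq_max, kap_dirac_dirac, kap_mu_dirac μ,
      gaussK_self]
  have e3 : DK σ μ (Measure.dirac x) ^ 2 = max (kap σ μ μ + σ^2 - 2*kde σ μ x) 0 := by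
    rw [DK, sqrt_sq_eq_max, kap_dirac_dirac, kap_mu_dirac μ,
      gaussK_self]
  rw [e1, e2, e3]
  have key := key_ineq (μ := μ) hσ p x
  have h1 : max (kap σ μ μ + σ^2 - 2*kde σ μ p) 0
      ≤ 2 * max (kap σ μ μ + σ^2 - 2*kde σ μ x) 0 + 2 * max (2*σ^2 - 2*gaussK σ p x) 0 := by
    apply max_le
    · have hb := le_max_left (kap σ μ μ + σ^2 - 2*kde σ μ x) 0
      have hc := le_max_left (2*σ^2 - 2*gaussK σ p x) 0
      linarith
    · have hb := le_max_right (kap σ μ μ + σ^2 - 2*kde σ μ x) 0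
      have hc := le_max_right (2*σ^2 - 2*gaussK σ p x) 0
      linarith
  linarith [le_max_right (2*σ^2 - 2*gaussK σ p x) (0:ℝ)]
end

section
/- Let μ be a probability measure on ℝ^d and let p₊ ∈ ℝ^d satisfy κ(μ, δ_q) ≤ κ(μ, δ_{p₊}) for all q ∈ ℝ^d (i.e., p₊ maximizes kde_μ over ℝ^d). Then for every x ∈ ℝ^d, Kpow_{{p₊}}(μ,x) = √(D_K(p₊,x)² + d^K_μ(p₊)²) ≤ √14 · D_K(μ, δ_x). -/
open MeasureTheory

namespace KPD
open Real

variable {d : ℕ}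
local notation "E" => EuclideanSpace ℝ (Fin d)

noncomputable def hker (σ : ℝ) (y t : EuclideanSpace ℝ (Fin d)) : ℝ :=
  Real.exp (-(1 / σ ^ 2) * ‖y - t‖ ^ 2)

lemma hker_cont (σ : ℝ) : Continuous (fun pt : E × E => hker σ pt.1 pt.2) := by
  unfold hker; fun_prop

lemma hker_nonneg (σ : ℝ) (y t : E) : 0 ≤ hker σ y t := Real.exp_nonneg _

lemma hker_le_one {σ : ℝ} (hσ : 0 < σ) (y t : E) : hker σ y t ≤ 1 := by
  rw [hker, Real.exp_le_one_iff]
  have : 0 ≤ ‖y - t‖ ^ 2 := sq_nonneg _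
  have h2 : (0:ℝ) < σ ^ 2 := by positivity
  nlinarith [mul_nonneg (le_of_lt (show (0:ℝ) < 1/σ^2 by positivity)) this]

lemma integrable_gauss {b : ℝ} (hb : 0 < b) :
    Integrable (fun t : E => Real.exp (-b * ‖t‖ ^ 2)) := by
  have h := (GaussianFourier.integrable_cexp_neg_mul_sq_norm_add (V := E)
    (b := (b : ℂ)) (by simpa using hb) 0 0).norm
  convert h using 2 with t
  rw [Complex.norm_exp]
  norm_num
  left
  norm_cast

lemma midpoint_norm (p q t : E) : ‖p - t‖ ^ 2 + ‖q - t‖ ^ 2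
    = (1 / 2) * ‖p - q‖ ^ 2 + 2 * ‖(2:ℝ)⁻¹ • (p + q) - t‖ ^ 2 := by
  have hpar := parallelogram_law_with_norm ℝ (p - t) (q - t)
  have h1 : (p - t) + (q - t) = (2:ℝ) • ((2:ℝ)⁻¹ • (p + q) - t) := by
    module
  have h2 : (p - t) - (q - t) = p - q := by abel
  rw [h1, h2, norm_smul] at hpar
  simp only [Real.norm_ofNat] at hpar
  nlinarith [hpar]

lemma hprod {σ : ℝ} (hσ : 0 < σ) (p q t : E) : hker σ p t * hker σ q t
    = Real.exp (-(1 / (2 * σ ^ 2)) * ‖p - q‖ ^ 2)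
      * Real.exp (-(2 / σ ^ 2) * ‖(2:ℝ)⁻¹ • (p + q) - t‖ ^ 2) := by
  rw [hker, hker, ← Real.exp_add, ← Real.exp_add]
  congr 1
  have h := midpoint_norm (d := d) p q t
  have hs : σ ^ 2 ≠ 0 := by positivity
  set A := ‖p - t‖ ^ 2
  set B := ‖q - t‖ ^ 2
  set C := ‖p - q‖ ^ 2
  set D := ‖(2:ℝ)⁻¹ • (p + q) - t‖ ^ 2
  field_simp
  linear_combination (-2) * h

noncomputable def Ig (d : ℕ) (σ : ℝ) : ℝ :=
  ∫ t : EuclideanSpace ℝ (Fin d), Real.exp (-(2 / σ ^ 2) * ‖t‖ ^ 2)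

lemma Ig_pos {σ : ℝ} (hσ : 0 < σ) : 0 < Ig d σ := by
  rw [Ig, GaussianFourier.integral_rexp_neg_mul_sq_norm (by positivity)]
  positivity

lemma int_hprod {σ : ℝ} (hσ : 0 < σ) (p q : E) :
    ∫ t : E, hker σ p t * hker σ q t
      = Real.exp (-(1 / (2 * σ ^ 2)) * ‖p - q‖ ^ 2) * Ig d σ := by
  simp_rw [hprod hσ p q]
  rw [integral_const_mul]
  congr 1
  rw [Ig]
  have : ∀ t : E, ‖(2:ℝ)⁻¹ • (p + q) - t‖ = ‖t - (2:ℝ)⁻¹ • (p + q)‖ := fun t => norm_sub_rev _ _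
  simp_rw [this]
  exact integral_sub_right_eq_self (fun t : E => Real.exp (-(2 / σ ^ 2) * ‖t‖ ^ 2)) _


lemma gaussK_symm (σ : ℝ) (p q : E) : gaussK σ p q = gaussK σ q p := by
  rw [gaussK, gaussK, norm_sub_rev]

lemma gauss_eq {σ : ℝ} (hσ : 0 < σ) (p q : E) :
    ∫ t : E, hker σ p t * hker σ q t = (Ig d σ / σ ^ 2) * gaussK σ p q := by
  rw [int_hprod hσ, gaussK]
  have hs : σ ^ 2 ≠ 0 := by positivity
  rw [show -‖p - q‖ ^ 2 / (2 * σ ^ 2) = -(1 / (2 * σ ^ 2)) * ‖p - q‖ ^ 2 by ring]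
  field_simp

lemma int_hker {σ : ℝ} (hσ : 0 < σ) (y : E) :
    ∫ t : E, hker σ y t = ∫ t : E, rexp (-(1 / σ ^ 2) * ‖t‖ ^ 2) := by
  unfold hker
  simp_rw [norm_sub_rev y]
  exact integral_sub_right_eq_self (fun t : E => rexp (-(1 / σ ^ 2) * ‖t‖ ^ 2)) y

lemma integrable_hker {σ : ℝ} (hσ : 0 < σ) (y : E) :
    Integrable (fun t : E => hker σ y t) := by
  unfold hker
  simp_rw [norm_sub_rev y]
  exact (integrable_gauss (by positivity)).comp_sub_right y

lemma integrable_hker_mu {σ : ℝ} (hσ : 0 < σ) (μ : Measure E) [IsFiniteMeasure μ] (t : E) :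
    Integrable (fun q : E => hker σ q t) μ := by
  apply (integrable_const (1:ℝ)).mono'
  · exact ((hker_cont σ).comp (Continuous.prodMk_left t)).aestronglyMeasurable
  · refine Filter.Eventually.of_forall fun q => ?_
    rw [Real.norm_eq_abs, abs_of_nonneg (hker_nonneg _ _ _)]
    exact hker_le_one hσ _ _

lemma integrable_prod_hker {σ : ℝ} (hσ : 0 < σ) (μ : Measure E) [IsProbabilityMeasure μ] :
    Integrable (Function.uncurry fun p t : E => hker σ p t) (μ.prod volume) := by
  show Integrable (fun pt : E × E => hker σ pt.1 pt.2) (μ.prod volume)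
  rw [integrable_prod_iff ((hker_cont σ).aestronglyMeasurable)]
  constructor
  · exact Filter.Eventually.of_forall fun p => integrable_hker hσ p
  · apply (integrable_const (∫ t : E, rexp (-(1 / σ ^ 2) * ‖t‖ ^ 2))).congr
    refine Filter.Eventually.of_forall fun p => ?_
    rw [← int_hker hσ p]
    apply integral_congr_ae
    refine Filter.Eventually.of_forall fun t => ?_
    simp only [Real.norm_eq_abs]
    rw [abs_of_nonneg (hker_nonneg _ _ _)]

lemma swap_int {σ : ℝ} (hσ : 0 < σ) (μ : Measure E) [IsProbabilityMeasure μ]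
    (f : E → E → ℝ) (hf : AEStronglyMeasurable (Function.uncurry f) (μ.prod volume))
    (h0 : ∀ p t, 0 ≤ f p t) (hle : ∀ p t, f p t ≤ hker σ p t) :
    ∫ p, ∫ t, f p t ∂volume ∂μ = ∫ t, ∫ p, f p t ∂μ ∂volume := by
  apply integral_integral_swap
  apply (integrable_prod_hker hσ μ).mono' hf
  refine Filter.Eventually.of_forall fun z => ?_
  simp only [Function.uncurry, Real.norm_eq_abs]
  rw [abs_of_nonneg (h0 _ _)]
  exact hle z.1 z.2

noncomputable def Gf (σ : ℝ) (μ : Measure (EuclideanSpace ℝ (Fin d))) :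
    EuclideanSpace ℝ (Fin d) → ℝ := fun t => ∫ p, hker σ p t ∂μ

lemma nn_of_mul {c x : ℝ} (hc : 0 < c) (h : 0 ≤ c * x) : 0 ≤ x := by
  by_contra hx
  push_neg at hx
  nlinarith

lemma kap_dirac_right (σ : ℝ) (μ : Measure (EuclideanSpace ℝ (Fin d))) (y : E) :
    kap σ μ (Measure.dirac y) = ∫ p, gaussK σ p y ∂μ := by
  rw [kap]
  apply integral_congr_ae
  exact Filter.Eventually.of_forall fun p => integral_dirac (fun q => gaussK σ p q) y

lemma kap_dirac_dirac (σ : ℝ) (y z : E) :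
    kap σ (Measure.dirac y) (Measure.dirac z) = gaussK σ y z := by
  rw [kap]
  have : ∀ p : E, ∫ q, gaussK σ p q ∂(Measure.dirac z) = gaussK σ p z :=
    fun p => integral_dirac (fun q => gaussK σ p q) z
  simp_rw [this]
  exact integral_dirac (fun p => gaussK σ p z) y

lemma gaussK_self (σ : ℝ) (y : E) : gaussK σ y y = σ ^ 2 := by
  rw [gaussK]; simp

variable {σ : ℝ} (hσ : 0 < σ) (μ : Measure (EuclideanSpace ℝ (Fin d))) [IsProbabilityMeasure μ]
include hσ
set_option linter.unusedSectionVars false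

lemma Gf_sm : StronglyMeasurable (Gf σ μ) :=
  StronglyMeasurable.integral_prod_left ((hker_cont σ).stronglyMeasurable)

lemma Gf_nonneg (t : E) : 0 ≤ Gf σ μ t :=
  integral_nonneg fun p => hker_nonneg σ p t

lemma Gf_le_one (t : E) : Gf σ μ t ≤ 1 := by
  rw [Gf]
  calc ∫ p, hker σ p t ∂μ ≤ ∫ _p, (1:ℝ) ∂μ := by
        apply integral_mono (integrable_hker_mu hσ μ t) (integrable_const 1)
        exact fun p => hker_le_one hσ p t
    _ = 1 := by simp

lemma int_Gf_hker (y : E) :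
    ∫ t : E, Gf σ μ t * hker σ y t = (Ig d σ / σ ^ 2) * kap σ μ (Measure.dirac y) := by
  have hswap := swap_int hσ μ (fun p t => hker σ p t * hker σ y t)
    (((hker_cont σ).mul ((hker_cont σ).comp
      (continuous_const.prodMk continuous_snd))).aestronglyMeasurable)
    (fun p t => mul_nonneg (hker_nonneg _ _ _) (hker_nonneg _ _ _))
    (fun p t => mul_le_of_le_one_right (hker_nonneg _ _ _) (hker_le_one hσ _ _))
  have lhs : ∀ p : E, ∫ t : E, hker σ p t * hker σ y t
      = (Ig d σ / σ ^ 2) * gaussK σ p y := fun p => gauss_eq hσ p y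
  simp_rw [lhs, integral_const_mul] at hswap
  rw [← kap_dirac_right σ μ y] at hswap
  rw [hswap]
  apply integral_congr_ae
  refine Filter.Eventually.of_forall fun t => ?_
  simp only [Gf]
  rw [← integral_mul_const]

lemma int_kap_dirac : ∫ p, kap σ μ (Measure.dirac p) ∂μ = kap σ μ μ := by
  simp only [kap_dirac_right σ μ]
  rw [kap]
  apply integral_congr_ae
  refine Filter.Eventually.of_forall fun p => ?_
  apply integral_congr_ae
  exact Filter.Eventually.of_forall fun q => gaussK_symm σ q p


lemma int_Gf_sq :
    ∫ t : E, Gf σ μ t ^ 2 = (Ig d σ / σ ^ 2) * kap σ μ μ := by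
  have hswap := swap_int hσ μ (fun p t => hker σ p t * Gf σ μ t)
    (((hker_cont σ).aestronglyMeasurable).mul
      (((Gf_sm hσ μ).comp_measurable measurable_snd).aestronglyMeasurable))
    (fun p t => mul_nonneg (hker_nonneg _ _ _) (Gf_nonneg hσ μ t))
    (fun p t => mul_le_of_le_one_right (hker_nonneg _ _ _) (Gf_le_one hσ μ t))
  have lhs : ∀ p : E, ∫ t : E, hker σ p t * Gf σ μ t
      = (Ig d σ / σ ^ 2) * kap σ μ (Measure.dirac p) := by
    intro p
    rw [← int_Gf_hker hσ μ p]
    apply integral_congr_ae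
    exact Filter.Eventually.of_forall fun t => mul_comm _ _
  simp_rw [lhs, integral_const_mul] at hswap
  rw [int_kap_dirac hσ μ] at hswap
  rw [hswap]
  apply integral_congr_ae
  refine Filter.Eventually.of_forall fun t => ?_
  simp only [Gf]
  rw [integral_mul_const]
  ring

lemma intGf : Integrable (Gf σ μ) volume := by
  have h := (integrable_prod_hker hσ μ).integral_prod_right
  exact h

lemma int_Gf_hk (y : E) : Integrable (fun t : E => Gf σ μ t * hker σ y t) volume := by
  apply (integrable_hker hσ y).mono'
  · exact (Gf_sm hσ μ).aestronglyMeasurable.mul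
      ((hker_cont σ).comp (Continuous.prodMk_right y)).aestronglyMeasurable
  · refine Filter.Eventually.of_forall fun t => ?_
    rw [Real.norm_eq_abs, abs_of_nonneg (mul_nonneg (Gf_nonneg hσ μ t) (hker_nonneg _ _ _))]
    exact mul_le_of_le_one_left (hker_nonneg _ _ _) (Gf_le_one hσ μ t)

lemma int_hk_hk (y z : E) : Integrable (fun t : E => hker σ y t * hker σ z t) volume := by
  apply (integrable_hker hσ y).mono'
  · exact ((hker_cont σ).comp (Continuous.prodMk_right y)).aestronglyMeasurable.mul
      ((hker_cont σ).comp (Continuous.prodMk_right z)).aestronglyMeasurable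
  · refine Filter.Eventually.of_forall fun t => ?_
    rw [Real.norm_eq_abs, abs_of_nonneg (mul_nonneg (hker_nonneg _ _ _) (hker_nonneg _ _ _))]
    exact mul_le_of_le_one_right (hker_nonneg _ _ _) (hker_le_one hσ _ _)

lemma intGf_sq : Integrable (fun t : E => Gf σ μ t ^ 2) volume := by
  apply (intGf hσ μ).mono'
  · exact ((Gf_sm hσ μ).aestronglyMeasurable.mul (Gf_sm hσ μ).aestronglyMeasurable).congr
      (Filter.Eventually.of_forall fun t => (pow_two (Gf σ μ t)).symm)
  · refine Filter.Eventually.of_forall fun t => ?_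
    rw [Real.norm_eq_abs, abs_of_nonneg (sq_nonneg _), pow_two]
    exact mul_le_of_le_one_left (Gf_nonneg hσ μ t) (Gf_le_one hσ μ t)

lemma sq_diff_eq (y : E) : (fun t : E => (Gf σ μ t - hker σ y t) ^ 2)
    = fun t : E => Gf σ μ t ^ 2 - 2 * (Gf σ μ t * hker σ y t) + hker σ y t * hker σ y t :=
  funext fun t => by ring

lemma int_sq_diff_integrable (y : E) :
    Integrable (fun t : E => (Gf σ μ t - hker σ y t) ^ 2) volume := by
  rw [sq_diff_eq hσ μ y]
  exact ((intGf_sq hσ μ).sub ((int_Gf_hk hσ μ y).const_mul 2)).add (int_hk_hk hσ y y)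

lemma int_sq_diff (y : E) : ∫ t : E, (Gf σ μ t - hker σ y t) ^ 2
    = (Ig d σ / σ ^ 2) * (kap σ μ μ + σ ^ 2 - 2 * kap σ μ (Measure.dirac y)) := by
  have h2 : Integrable (fun t : E => 2 * (Gf σ μ t * hker σ y t)) volume :=
    (int_Gf_hk hσ μ y).const_mul 2
  have h1 : Integrable (fun t : E => Gf σ μ t ^ 2 - 2 * (Gf σ μ t * hker σ y t)) volume :=
    (intGf_sq hσ μ).sub h2
  rw [sq_diff_eq hσ μ y, integral_add h1 (int_hk_hk hσ y y),
    integral_sub (intGf_sq hσ μ) h2,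
    integral_const_mul, int_Gf_sq hσ μ, int_Gf_hker hσ μ y, gauss_eq hσ y y, gaussK_self σ y]
  ring

lemma sq_diff_pt_eq (p x : E) : (fun t : E => (hker σ p t - hker σ x t) ^ 2)
    = fun t : E => hker σ p t * hker σ p t - 2 * (hker σ p t * hker σ x t)
      + hker σ x t * hker σ x t :=
  funext fun t => by ring

lemma int_sq_diff_pt_integrable (p x : E) :
    Integrable (fun t : E => (hker σ p t - hker σ x t) ^ 2) volume := by
  rw [sq_diff_pt_eq hσ p x]
  exact ((int_hk_hk hσ p p).sub ((int_hk_hk hσ p x).const_mul 2)).add (int_hk_hk hσ x x)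

lemma int_sq_diff_pt (p x : E) : ∫ t : E, (hker σ p t - hker σ x t) ^ 2
    = (Ig d σ / σ ^ 2) * (2 * σ ^ 2 - 2 * gaussK σ p x) := by
  have h2 : Integrable (fun t : E => 2 * (hker σ p t * hker σ x t)) volume :=
    (int_hk_hk hσ p x).const_mul 2
  have h1 : Integrable (fun t : E => hker σ p t * hker σ p t
      - 2 * (hker σ p t * hker σ x t)) volume := (int_hk_hk hσ p p).sub h2
  rw [sq_diff_pt_eq hσ p x, integral_add h1 (int_hk_hk hσ x x),
    integral_sub (int_hk_hk hσ p p) h2,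
    integral_const_mul, gauss_eq hσ p p, gauss_eq hσ p x, gauss_eq hσ x x,
    gaussK_self σ p, gaussK_self σ x]
  ring

lemma key_ineq (p x : E) : ∫ t : E, (hker σ p t - hker σ x t) ^ 2
    ≤ 2 * (∫ t : E, (Gf σ μ t - hker σ p t) ^ 2)
      + 2 * ∫ t : E, (Gf σ μ t - hker σ x t) ^ 2 := by
  have hb : Integrable (fun t : E => 2 * (Gf σ μ t - hker σ p t) ^ 2) volume :=
    (int_sq_diff_integrable hσ μ p).const_mul 2
  have ha : Integrable (fun t : E => 2 * (Gf σ μ t - hker σ x t) ^ 2) volume :=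
    (int_sq_diff_integrable hσ μ x).const_mul 2
  have h := integral_mono (int_sq_diff_pt_integrable hσ p x) (hb.add ha)
    (fun t => by
      show (hker σ p t - hker σ x t) ^ 2 ≤ 2 * (Gf σ μ t - hker σ p t) ^ 2
        + 2 * (Gf σ μ t - hker σ x t) ^ 2
      nlinarith [sq_nonneg ((Gf σ μ t - hker σ p t) + (Gf σ μ t - hker σ x t))])
  simp only [Pi.add_apply] at h
  rw [integral_add hb ha, integral_const_mul, integral_const_mul] at h
  exact h

end KPD

/-- With `p₊` maximizing `kde_μ`, the one-point kernel power distance satisfies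
`√(D_K(p₊,x)² + d^K_μ(p₊)²) ≤ √14 · D_K(μ, δ_x)`. -/
theorem kernel_power_distance_pPlus {d : ℕ} (hd : 1 ≤ d) (σ : ℝ) (hσ : 0 < σ)
    (μ : Measure (EuclideanSpace ℝ (Fin d))) [IsProbabilityMeasure μ]
    (pPlus : EuclideanSpace ℝ (Fin d))
    (hmax : ∀ q : EuclideanSpace ℝ (Fin d),
      kap σ μ (Measure.dirac q) ≤ kap σ μ (Measure.dirac pPlus)) :
    ∀ x : EuclideanSpace ℝ (Fin d),
      Real.sqrt (DKpt σ pPlus x ^ 2 + dKmu σ μ pPlus ^ 2)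
        ≤ Real.sqrt 14 * DK σ μ (Measure.dirac x) := by
  intro x
  set A2 := kap σ μ μ + σ ^ 2 - 2 * kap σ μ (Measure.dirac x) with hA2def
  set B2 := kap σ μ μ + σ ^ 2 - 2 * kap σ μ (Measure.dirac pPlus) with hB2def
  set C2 := 2 * σ ^ 2 - 2 * gaussK σ pPlus x with hC2def
  have hIg : 0 < KPD.Ig d σ / σ ^ 2 := div_pos (KPD.Ig_pos hσ) (by positivity)
  have hAeq := KPD.int_sq_diff hσ μ x
  have hBeq := KPD.int_sq_diff hσ μ pPlus
  have hCeq := KPD.int_sq_diff_pt hσ pPlus x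
  have hA0 : 0 ≤ A2 := by
    refine KPD.nn_of_mul hIg ?_
    rw [← hAeq]
    exact integral_nonneg fun t => sq_nonneg _
  have hB0 : 0 ≤ B2 := by
    refine KPD.nn_of_mul hIg ?_
    rw [← hBeq]
    exact integral_nonneg fun t => sq_nonneg _
  have hC0 : 0 ≤ C2 := by
    refine KPD.nn_of_mul hIg ?_
    rw [← hCeq]
    exact integral_nonneg fun t => sq_nonneg _
  have hBA : B2 ≤ A2 := by
    have := hmax x
    rw [hA2def, hB2def]
    linarith
  have hC : C2 ≤ 2 * B2 + 2 * A2 := by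
    have h := KPD.key_ineq hσ μ pPlus x
    rw [hAeq, hBeq, hCeq] at h
    refine le_of_mul_le_mul_left ?_ hIg
    calc KPD.Ig d σ / σ ^ 2 * C2
        ≤ 2 * (KPD.Ig d σ / σ ^ 2 * B2) + 2 * (KPD.Ig d σ / σ ^ 2 * A2) := h
      _ = KPD.Ig d σ / σ ^ 2 * (2 * B2 + 2 * A2) := by ring
  have e1 : DKpt σ pPlus x ^ 2 = C2 := by
    rw [DKpt, DK, KPD.kap_dirac_dirac, KPD.kap_dirac_dirac, KPD.kap_dirac_dirac,
      KPD.gaussK_self, KPD.gaussK_self]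
    rw [show σ ^ 2 + σ ^ 2 - 2 * gaussK σ pPlus x = C2 by rw [hC2def]; ring]
    exact Real.sq_sqrt hC0
  have e2 : dKmu σ μ pPlus ^ 2 = B2 := by
    rw [dKmu, DK, KPD.kap_dirac_dirac, KPD.gaussK_self]
    exact Real.sq_sqrt hB0
  have e3 : DK σ μ (Measure.dirac x) = Real.sqrt A2 := by
    rw [DK, KPD.kap_dirac_dirac, KPD.gaussK_self]
  rw [e1, e2, e3, ← Real.sqrt_mul (by norm_num : (0:ℝ) ≤ 14) A2]
  apply Real.sqrt_le_sqrt
  linarith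
end
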